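/- With t⁺, t⁻, t³ defined as above and τ_t = 1 − λt³, one has the identities τ_t = −R²(X³)⁻², t⁺t⁻ = −λ⁻²(1 + q²τ_t), and t⁻t⁺ = −λ⁻²(1 + q⁻²τ_t) in the localized quantum space algebra. -/

import Mathlib

/-- With t⁺, t⁻, t³ as in the homomorphism into the localized quantum
space algebra and τ_t = 1 − λt³, one has τ_t = −R²(X³)⁻², t⁺t⁻ = −λ⁻²(1 + q²τ_t),
and t⁻t⁺ = −λ⁻²(1 + q⁻²τ_t). -/
theorem stmt2 (q lam : ℝ) (hq : 1 < q) (hlam : lam = q - q⁻¹)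
    (A : Type*) [Ring A] [Algebra ℂ A] (Xp Xm X3 Xi R2 tp tm t3 tau : A)
    (h1 : X3 * Xp = ((q : ℂ) ^ 2) • (Xp * X3))
    (h2 : X3 * Xm = ((q : ℂ) ^ 2)⁻¹ • (Xm * X3))
    (h3 : Xm * Xp - Xp * Xm = (lam : ℂ) • (X3 * X3))
    (h4 : Xi * X3 = 1) (h5 : X3 * Xi = 1)
    (hR : R2 = X3 * X3 - (q : ℂ) • (Xp * Xm) - (q : ℂ)⁻¹ • (Xm * Xp))
    (htp : tp = ((-(lam * q ^ 3)⁻¹ * Real.sqrt (1 + q ^ 2) : ℝ) : ℂ) • (Xp * Xi))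
    (htm : tm = (((q ^ 2 / lam) * Real.sqrt (1 + q ^ 2) : ℝ) : ℂ) • (Xm * Xi))
    (ht3 : t3 = ((lam⁻¹ : ℝ) : ℂ) • (1 + R2 * (Xi * Xi)))
    (htau : tau = 1 - (lam : ℂ) • t3) :
    tau = -(R2 * (Xi * Xi)) ∧
    tp * tm = (-(((lam : ℂ)) ^ 2)⁻¹) • (1 + ((q : ℂ) ^ 2) • tau) ∧
    tm * tp = (-(((lam : ℂ)) ^ 2)⁻¹) • (1 + ((q : ℂ) ^ 2)⁻¹ • tau) := by
  have hqpos : (0:ℝ) < q := one_pos.trans hq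
  have hlampos : (0:ℝ) < lam := by
    have h1' : q⁻¹ < 1 := inv_lt_one_of_one_lt₀ hq
    rw [hlam]; linarith
  have hq0 : (q:ℂ) ≠ 0 := by exact_mod_cast hqpos.ne'
  have hl0 : (lam:ℂ) ≠ 0 := by exact_mod_cast hlampos.ne'
  have hlamq : (lam:ℂ) * (q:ℂ) = (q:ℂ)^2 - 1 := by
    rw [hlam]; push_cast; field_simp
  have hs2 : ((Real.sqrt (1 + q ^ 2) : ℝ) : ℂ) * ((Real.sqrt (1 + q ^ 2) : ℝ) : ℂ)
      = 1 + (q:ℂ)^2 := by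
    have h : Real.sqrt (1 + q ^ 2) * Real.sqrt (1 + q ^ 2) = 1 + q ^ 2 :=
      Real.mul_self_sqrt (by positivity)
    exact_mod_cast h
  -- part 1
  have htau' : tau = -(R2 * (Xi * Xi)) := by
    rw [htau, ht3, smul_smul]
    push_cast
    rw [mul_inv_cancel₀ hl0, one_smul]
    abel
  -- shared facts
  have h2' : Xm * X3 = ((q:ℂ)^2) • (X3 * Xm) := by
    rw [h2, smul_smul, mul_inv_cancel₀ (pow_ne_zero 2 hq0), one_smul]
  have h1' : Xp * X3 = ((q:ℂ)^2)⁻¹ • (X3 * Xp) := by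
    rw [h1, smul_smul, inv_mul_cancel₀ (pow_ne_zero 2 hq0), one_smul]
  have hXiXm : Xi * Xm = ((q:ℂ)^2) • (Xm * Xi) := by
    calc Xi * Xm = Xi * Xm * (X3 * Xi) := by rw [h5, mul_one]
      _ = Xi * (Xm * X3) * Xi := by noncomm_ring
      _ = ((q:ℂ)^2) • (Xi * (X3 * Xm) * Xi) := by
          rw [h2']; simp [mul_smul_comm, smul_mul_assoc]
      _ = ((q:ℂ)^2) • ((Xi * X3) * (Xm * Xi)) := by
          congr 1; noncomm_ring
      _ = ((q:ℂ)^2) • (Xm * Xi) := by rw [h4, one_mul]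
  have hXiXp : Xi * Xp = ((q:ℂ)^2)⁻¹ • (Xp * Xi) := by
    calc Xi * Xp = Xi * Xp * (X3 * Xi) := by rw [h5, mul_one]
      _ = Xi * (Xp * X3) * Xi := by noncomm_ring
      _ = ((q:ℂ)^2)⁻¹ • (Xi * (X3 * Xp) * Xi) := by
          rw [h1']; simp [mul_smul_comm, smul_mul_assoc]
      _ = ((q:ℂ)^2)⁻¹ • ((Xi * X3) * (Xp * Xi)) := by
          congr 1; noncomm_ring
      _ = ((q:ℂ)^2)⁻¹ • (Xp * Xi) := by rw [h4, one_mul]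
  have hX3sq : X3 * X3 * (Xi * Xi) = 1 := by
    have e : X3 * X3 * (Xi * Xi) = X3 * (X3 * Xi) * Xi := by noncomm_ring
    rw [e, h5, mul_one, h5]
  have hmp : Xm * Xp * (Xi * Xi) = Xp * Xm * (Xi * Xi) + (lam:ℂ) • 1 := by
    have e : Xm * Xp = Xp * Xm + (lam:ℂ) • (X3 * X3) := by
      rw [← h3]; abel
    rw [e, add_mul, smul_mul_assoc, hX3sq]
  have hR2' : R2 * (Xi * Xi) =
      1 - (q:ℂ) • (Xp * Xm * (Xi * Xi)) - (q:ℂ)⁻¹ • (Xm * Xp * (Xi * Xi)) := by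
    rw [hR, sub_mul, sub_mul, smul_mul_assoc, smul_mul_assoc, hX3sq]
  have hPP : (Xp * Xi) * (Xm * Xi) = ((q:ℂ)^2) • (Xp * Xm * (Xi * Xi)) := by
    calc (Xp * Xi) * (Xm * Xi) = Xp * (Xi * Xm) * Xi := by noncomm_ring
      _ = ((q:ℂ)^2) • (Xp * (Xm * Xi) * Xi) := by
          rw [hXiXm]; simp [mul_smul_comm, smul_mul_assoc]
      _ = ((q:ℂ)^2) • (Xp * Xm * (Xi * Xi)) := by congr 1; noncomm_ring
  have hMM : (Xm * Xi) * (Xp * Xi) = ((q:ℂ)^2)⁻¹ • (Xm * Xp * (Xi * Xi)) := by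
    calc (Xm * Xi) * (Xp * Xi) = Xm * (Xi * Xp) * Xi := by noncomm_ring
      _ = ((q:ℂ)^2)⁻¹ • (Xm * (Xp * Xi) * Xi) := by
          rw [hXiXp]; simp [mul_smul_comm, smul_mul_assoc]
      _ = ((q:ℂ)^2)⁻¹ • (Xm * Xp * (Xi * Xi)) := by congr 1; noncomm_ring
  refine ⟨htau', ?_, ?_⟩
  · rw [htp, htm, smul_mul_assoc, mul_smul_comm, hPP, htau', hR2', hmp]
    push_cast
    match_scalars
    · field_simp
      linear_combination (-1:ℂ) * hs2
    · field_simp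
      linear_combination hlamq
  · rw [htp, htm, smul_mul_assoc, mul_smul_comm, hMM, htau', hR2', hmp]
    push_cast
    match_scalars
    · field_simp [hl0, hq0]
      linear_combination (-1:ℂ) * hs2
    · field_simp [hl0, hq0]
      linear_combination (-(lam:ℂ)) * hs2 + (-(q:ℂ)) * hlamq
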